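/- Let m > 6 and let A be the Mixup matrix. Let π be a bijection of the row index set (the unordered pairs of distinct elements of {1, …, m}) and let PA denote the row-permuted matrix (PA)_{r,k} = A_{π(r),k}. If there is no permutation σ of the columns {1, …, m} such that (PA)_{r,k} = A_{r,σ(k)} for all rows r and columns k, then the rank of the m(m−1)/2 × 2m matrix [A, PA], obtained by concatenating the columns of PA after those of A, is strictly greater than m. -/

import Mathlib

/-- Row index set of the Mixup matrix: unordered pairs of distinct elements of `{1, …, m}`. -/
abbrev PairIdx (m : ℕ) := {p : Sym2 (Fin m) // ¬p.IsDiag}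

/-- The Mixup matrix: rows indexed by unordered pairs `{i, j}` of distinct indices,
columns by `{1, …, m}`, with entry `1` iff the column index belongs to the pair. -/
def mixupMatrix (m : ℕ) : Matrix (PairIdx m) (Fin m) ℝ :=
  fun r k => if k ∈ r.1 then 1 else 0

namespace MixupAux

/-- A fresh element avoiding any four given ones. -/
lemma exists_ne4 {m : ℕ} (hm : 5 ≤ m) (a b c d : Fin m) :
    ∃ w : Fin m, w ≠ a ∧ w ≠ b ∧ w ≠ c ∧ w ≠ d := by
  have hcard : ({a, b, c, d} : Finset (Fin m)).card < m := by
    have h1 : ({d} : Finset (Fin m)).card = 1 := Finset.card_singleton d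
    have h2 := Finset.card_insert_le c ({d} : Finset (Fin m))
    have h3 := Finset.card_insert_le b ({c, d} : Finset (Fin m))
    have h4 := Finset.card_insert_le a ({b, c, d} : Finset (Fin m))
    omega
  by_contra h'
  push_neg at h'
  have hsub : (Finset.univ : Finset (Fin m)) ⊆ {a, b, c, d} := by
    intro w _
    simp only [Finset.mem_insert, Finset.mem_singleton]
    by_cases h1 : w = a; · exact Or.inl h1
    by_cases h2 : w = b; · exact Or.inr (Or.inl h2)
    by_cases h3 : w = c; · exact Or.inr (Or.inr (Or.inl h3))
    exact Or.inr (Or.inr (Or.inr (h' w h1 h2 h3)))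
  have := Finset.card_le_card hsub
  simp [Finset.card_univ] at this
  omega

/-- Build a `PairIdx` from two distinct elements. -/
def mkp {m : ℕ} (i j : Fin m) (h : i ≠ j) : PairIdx m :=
  ⟨s(i, j), fun hd => h (Sym2.mk_isDiag_iff.mp hd)⟩

lemma mem_mkp {m : ℕ} {i j k : Fin m} (h : i ≠ j) :
    k ∈ (mkp i j h).1 ↔ k = i ∨ k = j := Sym2.mem_iff

lemma sum_col {m : ℕ} (y : Fin m → ℝ) (i j : Fin m) (hij : i ≠ j)
    (hd : ¬(s(i, j) : Sym2 (Fin m)).IsDiag) :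
    ∑ k, y k * mixupMatrix m ⟨s(i, j), hd⟩ k = y i + y j := by
  have hpt : ∀ k : Fin m, y k * mixupMatrix m ⟨s(i, j), hd⟩ k
      = (if k = i then y i else 0) + (if k = j then y j else 0) := by
    intro k
    simp only [mixupMatrix, Sym2.mem_iff]
    by_cases h1 : k = i <;> by_cases h2 : k = j
    · exact absurd (h1.symm.trans h2) hij
    · simp [h1, h2, hij]
    · simp [h1, h2, hij, Ne.symm hij]
    · simp [h1, h2]
  rw [Finset.sum_congr rfl (fun k _ => hpt k), Finset.sum_add_distrib]
  simp

/-- Classification of real vectors whose pairwise sums are all `0` or `1`. -/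
lemma classify {m : ℕ} (hm : 5 ≤ m) (x : Fin m → ℝ)
    (hx : ∀ i j : Fin m, i ≠ j → x i + x j = 0 ∨ x i + x j = 1) :
    (∀ i j : Fin m, i ≠ j → x i + x j ≠ 1) ∨
    (∀ i j : Fin m, i ≠ j → x i + x j = 1) ∨
    (∃ v, ∀ i j : Fin m, i ≠ j → (x i + x j = 1 ↔ (i = v ∨ j = v))) ∨
    (∃ v, ∀ i j : Fin m, i ≠ j → (x i + x j = 1 ↔ (i ≠ v ∧ j ≠ v))) := by
  have hval : ∀ k, x k = -(1/2) ∨ x k = 0 ∨ x k = 1/2 ∨ x k = 1 := by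
    intro k
    obtain ⟨i, hik, -, -, -⟩ := exists_ne4 hm k k k k
    obtain ⟨j, hjk, hji, -, -⟩ := exists_ne4 hm k i i i
    rcases hx i k hik with h1 | h1 <;> rcases hx j k hjk with h2 | h2 <;>
      rcases hx i j (Ne.symm hji) with h3 | h3 <;>
      first
        | (left; linarith)
        | (right; left; linarith)
        | (right; right; left; linarith)
        | (right; right; right; linarith)
  by_cases h1 : ∃ v, x v = 1
  · obtain ⟨v, hv⟩ := h1
    have hz : ∀ i, i ≠ v → x i = 0 := by
      intro i hiv
      rcases hval i with h' | h' | h' | h' <;> rcases hx i v hiv with h | h <;> linarith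
    right; right; left
    refine ⟨v, fun i j hij => ?_⟩
    by_cases hi : i = v <;> by_cases hj : j = v
    · exact absurd (hi.trans hj.symm) hij
    · exact ⟨fun _ => Or.inl hi, fun _ => by rw [hi, hv, hz j hj]; norm_num⟩
    · exact ⟨fun _ => Or.inr hj, fun _ => by rw [hj, hv, hz i hi]; norm_num⟩
    · exact ⟨fun h => absurd h (by rw [hz i hi, hz j hj]; norm_num),
        fun h => absurd (h.resolve_left hi) hj⟩
  · by_cases h2 : ∃ v, x v = -(1/2)
    · obtain ⟨v, hv⟩ := h2
      have hz : ∀ i, i ≠ v → x i = 1/2 := by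
        intro i hiv
        rcases hval i with h' | h' | h' | h' <;> rcases hx i v hiv with h | h <;> linarith
      right; right; right
      refine ⟨v, fun i j hij => ?_⟩
      by_cases hi : i = v <;> by_cases hj : j = v
      · exact absurd (hi.trans hj.symm) hij
      · exact ⟨fun h => absurd h (by rw [hi, hv, hz j hj]; norm_num),
          fun h => absurd hi h.1⟩
      · exact ⟨fun h => absurd h (by rw [hj, hv, hz i hi]; norm_num),
          fun h => absurd hj h.2⟩
      · exact ⟨fun _ => ⟨hi, hj⟩, fun _ => by rw [hz i hi, hz j hj]; norm_num⟩
    · push_neg at h1 h2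
      have hval' : ∀ k, x k = 0 ∨ x k = 1/2 := by
        intro k
        rcases hval k with h | h | h | h
        · exact absurd h (h2 k)
        · exact Or.inl h
        · exact Or.inr h
        · exact absurd h (h1 k)
      by_cases h3 : ∃ v, x v = 1/2
      · obtain ⟨v, hv⟩ := h3
        have hall : ∀ i, x i = 1/2 := by
          intro i
          rcases hval' i with h | h
          · have hiv : i ≠ v := fun he => by rw [he, hv] at h; norm_num at h
            rcases hx i v hiv with hh | hh <;> (rw [h, hv] at hh; norm_num at hh)
          · exact h
        right; left
        intro i j _
        rw [hall i, hall j]; norm_num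
      · push_neg at h3
        have hall : ∀ i, x i = 0 := by
          intro i
          rcases hval' i with h | h
          · exact h
          · exact absurd h (h3 i)
        left
        intro i j _
        rw [hall i, hall j]; norm_num

end MixupAux

open MixupAux Matrix in
/-- Lemma 2 of the paper: if `m > 6` and a row permutation `π` of the Mixup matrix `A`
is not a column permutation of `A`, then `[A, PA]` has rank greater than `m`. -/
theorem mixup_matrix_concat_rank (m : ℕ) (hm : 6 < m) (π : Equiv.Perm (PairIdx m))
    (hnoperm : ¬∃ σ : Equiv.Perm (Fin m),
      ∀ (r : PairIdx m) (k : Fin m), mixupMatrix m (π r) k = mixupMatrix m r (σ k)) :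
    m < (Matrix.fromCols (mixupMatrix m) (fun r k => mixupMatrix m (π r) k)).rank := by
  have hm5 : 5 ≤ m := by omega
  by_contra hrank
  push_neg at hrank
  set B : Matrix (PairIdx m) (Fin m ⊕ Fin m) ℝ :=
    Matrix.fromCols (mixupMatrix m) (fun r k => mixupMatrix m (π r) k) with hB
  -- columns of the Mixup matrix are linearly independent
  have hli : LinearIndependent ℝ (mixupMatrix m).col := by
    rw [Fintype.linearIndependent_iff]
    intro g hg i
    have key : ∀ a b : Fin m, a ≠ b → g a + g b = 0 := by
      intro a b hab
      have hd : ¬(s(a, b) : Sym2 (Fin m)).IsDiag := fun h => hab (Sym2.mk_isDiag_iff.mp h)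
      have h := congrFun hg ⟨s(a, b), hd⟩
      simp only [Finset.sum_apply, Pi.smul_apply, smul_eq_mul, Matrix.col_apply, Matrix.transpose_apply,
        Pi.zero_apply] at h
      rwa [sum_col g a b hab hd] at h
    obtain ⟨j, hji, -, -, -⟩ := exists_ne4 hm5 i i i i
    obtain ⟨k, hki, hkj, -, -⟩ := exists_ne4 hm5 i j j j
    have h1 := key i j (Ne.symm hji)
    have h2 := key i k (Ne.symm hki)
    have h3 := key j k (Ne.symm hkj)
    linarith
  have hAspan : Module.finrank ℝ (Submodule.span ℝ (Set.range (mixupMatrix m).col)) = m := by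
    rw [finrank_span_eq_card hli, Fintype.card_fin]
  have hle : Submodule.span ℝ (Set.range (mixupMatrix m).col) ≤ Submodule.span ℝ (Set.range B.col) := by
    apply Submodule.span_mono
    rintro _ ⟨k, rfl⟩
    exact ⟨Sum.inl k, rfl⟩
  have heq : Submodule.span ℝ (Set.range (mixupMatrix m).col) = Submodule.span ℝ (Set.range B.col) := by
    apply Submodule.eq_of_le_of_finrank_le hle
    rw [hAspan, ← Matrix.rank_eq_finrank_span_cols]
    exact hrank
  -- each column of PA is an affine combination of columns of A
  have hmem : ∀ k : Fin m, ∃ x : Fin m → ℝ, ∀ (i j : Fin m) (hij : i ≠ j)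
      (hd : ¬(s(i, j) : Sym2 (Fin m)).IsDiag),
      mixupMatrix m (π ⟨s(i, j), hd⟩) k = x i + x j := by
    intro k
    have hmm : B.col (Sum.inr k) ∈ Submodule.span ℝ (Set.range (mixupMatrix m).col) := by
      rw [heq]; exact Submodule.subset_span ⟨Sum.inr k, rfl⟩
    rw [Submodule.mem_span_range_iff_exists_fun] at hmm
    obtain ⟨x, hxx⟩ := hmm
    refine ⟨x, fun i j hij hd => ?_⟩
    have h := congrFun hxx ⟨s(i, j), hd⟩
    simp only [Finset.sum_apply, Pi.smul_apply, smul_eq_mul, Matrix.col_apply, Matrix.transpose_apply] at h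
    rw [sum_col x i j hij hd] at h
    exact h.symm
  -- uniqueness and existence of rows mapped onto a given pair of columns
  have keyuniq : ∀ (a b : Fin m), a ≠ b → ∀ e1 e2 : PairIdx m,
      a ∈ (π e1).1 → b ∈ (π e1).1 → a ∈ (π e2).1 → b ∈ (π e2).1 → e1 = e2 := by
    intro a b hab e1 e2 h1 h2 h3 h4
    apply π.injective
    apply Subtype.ext
    rw [(Sym2.mem_and_mem_iff hab).mp ⟨h1, h2⟩, (Sym2.mem_and_mem_iff hab).mp ⟨h3, h4⟩]
  have keysurj : ∀ (a b : Fin m), a ≠ b → ∃ e : PairIdx m, a ∈ (π e).1 ∧ b ∈ (π e).1 := by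
    intro a b hab
    refine ⟨π.symm (mkp a b hab), ?_, ?_⟩ <;>
      simp [Equiv.apply_symm_apply, mkp, Sym2.mem_iff]
  -- decompose an arbitrary pair index
  have pcases : ∀ e : PairIdx m, ∃ (i j : Fin m) (hij : i ≠ j)
      (hd : ¬(s(i, j) : Sym2 (Fin m)).IsDiag), e = ⟨s(i, j), hd⟩ := by
    rintro ⟨p, hp⟩
    induction p using Sym2.ind with
    | _ i j => exact ⟨i, j, fun h => hp (Sym2.mk_isDiag_iff.mpr h), hp, rfl⟩
  -- shape classification of each "graph" G_k = {e : k ∈ π e}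
  have hshape : ∀ k : Fin m,
      (∀ e : PairIdx m, k ∉ (π e).1) ∨
      (∀ e : PairIdx m, k ∈ (π e).1) ∨
      (∃ v, ∀ e : PairIdx m, k ∈ (π e).1 ↔ v ∈ e.1) ∨
      (∃ v, ∀ e : PairIdx m, k ∈ (π e).1 ↔ v ∉ e.1) := by
    intro k
    obtain ⟨x, hx⟩ := hmem k
    have hiff : ∀ (i j : Fin m) (hij : i ≠ j) (hd : ¬(s(i, j) : Sym2 (Fin m)).IsDiag),
        (k ∈ ((π ⟨s(i, j), hd⟩ : PairIdx m)).1 ↔ x i + x j = 1) := by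
      intro i j hij hd
      have h := hx i j hij hd
      simp only [mixupMatrix] at h
      split_ifs at h with hk
      · exact ⟨fun _ => h.symm, fun _ => hk⟩
      · exact ⟨fun hh => absurd hh hk, fun hh => by rw [← h] at hh; norm_num at hh⟩
    have hx01 : ∀ i j : Fin m, i ≠ j → x i + x j = 0 ∨ x i + x j = 1 := by
      intro i j hij
      have hd : ¬(s(i, j) : Sym2 (Fin m)).IsDiag := fun h => hij (Sym2.mk_isDiag_iff.mp h)
      have h := hx i j hij hd
      simp only [mixupMatrix] at h
      split_ifs at h
      · exact Or.inr h.symm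
      · exact Or.inl h.symm
    rcases classify hm5 x hx01 with hc | hc | ⟨v, hc⟩ | ⟨v, hc⟩
    · left
      intro e
      obtain ⟨i, j, hij, hd, rfl⟩ := pcases e
      intro hk
      exact hc i j hij ((hiff i j hij hd).mp hk)
    · right; left
      intro e
      obtain ⟨i, j, hij, hd, rfl⟩ := pcases e
      exact (hiff i j hij hd).mpr (hc i j hij)
    · right; right; left
      refine ⟨v, fun e => ?_⟩
      obtain ⟨i, j, hij, hd, rfl⟩ := pcases e
      rw [hiff i j hij hd, hc i j hij, Sym2.mem_iff]
      constructor
      · rintro (rfl | rfl)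
        · exact Or.inl rfl
        · exact Or.inr rfl
      · rintro (rfl | rfl)
        · exact Or.inl rfl
        · exact Or.inr rfl
    · right; right; right
      refine ⟨v, fun e => ?_⟩
      obtain ⟨i, j, hij, hd, rfl⟩ := pcases e
      rw [hiff i j hij hd, hc i j hij, Sym2.mem_iff]
      constructor
      · rintro ⟨h1, h2⟩ (rfl | rfl)
        · exact h1 rfl
        · exact h2 rfl
      · intro h
        exact ⟨fun he => h (Or.inl he.symm), fun he => h (Or.inr he.symm)⟩
  -- no G_k is empty
  have hnotempty : ∀ k : Fin m, ¬(∀ e : PairIdx m, k ∉ (π e).1) := by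
    intro k hk
    obtain ⟨a, hak, -, -, -⟩ := exists_ne4 hm5 k k k k
    obtain ⟨e, he1, he2⟩ := keysurj k a (Ne.symm hak)
    exact hk e he1
  -- helper: two distinct rows mapped onto the same column pair give a contradiction
  have two_edges : ∀ (a b : Fin m), a ≠ b → ∀ e1 e2 : PairIdx m, e1 ≠ e2 →
      a ∈ (π e1).1 → b ∈ (π e1).1 → a ∈ (π e2).1 → b ∈ (π e2).1 → False := by
    intro a b hab e1 e2 hne h1 h2 h3 h4
    exact hne (keyuniq a b hab e1 e2 h1 h2 h3 h4)
  have mkp_ne : ∀ (i j j' : Fin m) (h : i ≠ j) (h' : i ≠ j'), j ≠ j' →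
      mkp i j h ≠ mkp i j' h' := by
    intro i j j' h h' hjj heq
    have := Subtype.ext_iff.mp heq
    simp only [mkp] at this
    exact hjj (Sym2.congr_right.mp this)
  -- no G_k is complete
  have hnotcomplete : ∀ a : Fin m, ¬(∀ e : PairIdx m, a ∈ (π e).1) := by
    intro a hA
    obtain ⟨b, hba, -, -, -⟩ := exists_ne4 hm5 a a a a
    have hab : a ≠ b := Ne.symm hba
    rcases hshape b with h | h | ⟨v, h⟩ | ⟨v, h⟩
    · exact hnotempty b h
    · obtain ⟨w1, -, -, -, -⟩ := exists_ne4 hm5 a a a a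
      obtain ⟨w2, hw21, -, -, -⟩ := exists_ne4 hm5 w1 w1 w1 w1
      obtain ⟨w3, hw31, hw32, -, -⟩ := exists_ne4 hm5 w1 w2 w2 w2
      exact two_edges a b hab (mkp w1 w2 (Ne.symm hw21)) (mkp w1 w3 (Ne.symm hw31))
        (mkp_ne w1 w2 w3 (Ne.symm hw21) (Ne.symm hw31) (Ne.symm hw32))
        (hA _) (h _) (hA _) (h _)
    · obtain ⟨w1, hw1v, -, -, -⟩ := exists_ne4 hm5 v v v v
      obtain ⟨w2, hw2v, hw21, -, -⟩ := exists_ne4 hm5 v w1 w1 w1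
      refine two_edges a b hab (mkp v w1 (Ne.symm hw1v)) (mkp v w2 (Ne.symm hw2v))
        (mkp_ne v w1 w2 (Ne.symm hw1v) (Ne.symm hw2v) (Ne.symm hw21).symm.symm)
        (hA _) ((h _).mpr ?_) (hA _) ((h _).mpr ?_)
      · exact (mem_mkp (Ne.symm hw1v)).mpr (Or.inl rfl)
      · exact (mem_mkp (Ne.symm hw2v)).mpr (Or.inl rfl)
    · obtain ⟨w1, hw1v, -, -, -⟩ := exists_ne4 hm5 v v v v
      obtain ⟨w2, hw2v, hw21, -, -⟩ := exists_ne4 hm5 v w1 w1 w1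
      obtain ⟨w3, hw3v, hw31, hw32, -⟩ := exists_ne4 hm5 v w1 w2 w2
      refine two_edges a b hab (mkp w1 w2 (Ne.symm hw21)) (mkp w1 w3 (Ne.symm hw31))
        (mkp_ne w1 w2 w3 (Ne.symm hw21) (Ne.symm hw31) (Ne.symm hw32))
        (hA _) ((h _).mpr ?_) (hA _) ((h _).mpr ?_)
      · intro hv
        rcases (mem_mkp (Ne.symm hw21)).mp hv with rfl | rfl
        · exact hw1v rfl
        · exact hw2v rfl
      · intro hv
        rcases (mem_mkp (Ne.symm hw31)).mp hv with rfl | rfl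
        · exact hw1v rfl
        · exact hw3v rfl
  -- no G_k is a co-star
  have hnotcostar : ∀ a : Fin m, ¬∃ u, ∀ e : PairIdx m, a ∈ (π e).1 ↔ u ∉ e.1 := by
    rintro a ⟨u, hu⟩
    obtain ⟨b, hba, -, -, -⟩ := exists_ne4 hm5 a a a a
    have hab : a ≠ b := Ne.symm hba
    rcases hshape b with h | h | ⟨v, h⟩ | ⟨v, h⟩
    · exact hnotempty b h
    · exact hnotcomplete b h
    · by_cases hvu : v = u
      · obtain ⟨e, he1, he2⟩ := keysurj a b hab
        exact (hu e).mp he1 (hvu ▸ (h e).mp he2)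
      · obtain ⟨w1, hw1v, hw1u, -, -⟩ := exists_ne4 hm5 v u u u
        obtain ⟨w2, hw2v, hw2u, hw21, -⟩ := exists_ne4 hm5 v u w1 w1
        refine two_edges a b hab (mkp v w1 (Ne.symm hw1v)) (mkp v w2 (Ne.symm hw2v))
          (mkp_ne v w1 w2 (Ne.symm hw1v) (Ne.symm hw2v) (Ne.symm hw21).symm.symm)
          ((hu _).mpr ?_) ((h _).mpr ((mem_mkp (Ne.symm hw1v)).mpr (Or.inl rfl)))
          ((hu _).mpr ?_) ((h _).mpr ((mem_mkp (Ne.symm hw2v)).mpr (Or.inl rfl)))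
        · intro hmem
          rcases (mem_mkp (Ne.symm hw1v)).mp hmem with rfl | rfl
          · exact hvu rfl
          · exact hw1u rfl
        · intro hmem
          rcases (mem_mkp (Ne.symm hw2v)).mp hmem with rfl | rfl
          · exact hvu rfl
          · exact hw2u rfl
    · obtain ⟨w1, hw1v, hw1u, -, -⟩ := exists_ne4 hm5 v u u u
      obtain ⟨w2, hw2v, hw2u, hw21, -⟩ := exists_ne4 hm5 v u w1 w1
      obtain ⟨w3, hw3v, hw3u, hw31, hw32⟩ := exists_ne4 hm5 v u w1 w2
      refine two_edges a b hab (mkp w1 w2 (Ne.symm hw21)) (mkp w1 w3 (Ne.symm hw31))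
        (mkp_ne w1 w2 w3 (Ne.symm hw21) (Ne.symm hw31) (Ne.symm hw32))
        ((hu _).mpr ?_) ((h _).mpr ?_) ((hu _).mpr ?_) ((h _).mpr ?_)
      · intro hmem
        rcases (mem_mkp (Ne.symm hw21)).mp hmem with rfl | rfl
        · exact hw1u rfl
        · exact hw2u rfl
      · intro hmem
        rcases (mem_mkp (Ne.symm hw21)).mp hmem with rfl | rfl
        · exact hw1v rfl
        · exact hw2v rfl
      · intro hmem
        rcases (mem_mkp (Ne.symm hw31)).mp hmem with rfl | rfl
        · exact hw1u rfl
        · exact hw3u rfl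
      · intro hmem
        rcases (mem_mkp (Ne.symm hw31)).mp hmem with rfl | rfl
        · exact hw1v rfl
        · exact hw3v rfl
  -- hence every G_k is a star
  have hstar : ∀ k : Fin m, ∃ v, ∀ e : PairIdx m, k ∈ (π e).1 ↔ v ∈ e.1 := by
    intro k
    rcases hshape k with h | h | h | h
    · exact absurd h (hnotempty k)
    · exact absurd h (hnotcomplete k)
    · exact h
    · exact absurd h (hnotcostar k)
  choose c hc using hstar
  -- star centers are pairwise distinct
  have hinj : Function.Injective c := by
    intro a b hcab
    by_contra hab
    obtain ⟨w1, hw1, -, -, -⟩ := exists_ne4 hm5 (c a) (c a) (c a) (c a)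
    obtain ⟨w2, hw2, hw21, -, -⟩ := exists_ne4 hm5 (c a) w1 w1 w1
    refine two_edges a b hab (mkp (c a) w1 (Ne.symm hw1)) (mkp (c a) w2 (Ne.symm hw2))
      (mkp_ne (c a) w1 w2 (Ne.symm hw1) (Ne.symm hw2) (Ne.symm hw21).symm.symm)
      ((hc a _).mpr ((mem_mkp (Ne.symm hw1)).mpr (Or.inl rfl)))
      ((hc b _).mpr ((mem_mkp (Ne.symm hw1)).mpr (Or.inl hcab.symm)))
      ((hc a _).mpr ((mem_mkp (Ne.symm hw2)).mpr (Or.inl rfl)))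
      ((hc b _).mpr ((mem_mkp (Ne.symm hw2)).mpr (Or.inl hcab.symm)))
  have hbij : Function.Bijective c := Finite.injective_iff_bijective.mp hinj
  refine hnoperm ⟨Equiv.ofBijective c hbij, fun r k => ?_⟩
  simp only [mixupMatrix, Equiv.ofBijective_apply]
  exact if_congr (hc k r) rfl rfl
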